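/- Fix β > 0. If (x,y) with x, y > 0 satisfies x²·cosh(β)^4 + y²·sinh(β)²·cosh(β) = x and x·y·sinh(β)·cosh(β)·(1+cosh(β)) = y, then we reach a contradiction; i.e., there is no fixed point with y ≠ 0. -/
import Mathlib


theorem stmt_4 (β : ℝ) (hβ : 0 < β) (x y : ℝ) (hx : 0 < x) (hy : 0 < y)
    (h1 : x ^ 2 * Real.cosh β ^ 4 + y ^ 2 * Real.sinh β ^ 2 * Real.cosh β = x)
    (h2 : x * y * (Real.sinh β * Real.cosh β * (1 + Real.cosh β)) = y) :
    False := by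
  set s := Real.sinh β with hsdef
  set c := Real.cosh β with hcdef
  have hs : 0 < s := Real.sinh_pos_iff.mpr hβ
  have hc : 1 < c := by
    rw [hcdef]
    nlinarith [Real.cosh_sq β, Real.sinh_pos_iff.mpr hβ, Real.cosh_pos (x := β)]
  have pyth : c ^ 2 - s ^ 2 = 1 := by
    rw [hsdef, hcdef]; nlinarith [Real.cosh_sq β, Real.sinh_sq β]
  have hx2 : x * (s * c * (1 + c)) = 1 := by
    have h2' : (x * (s * c * (1 + c))) * y = 1 * y := by ring_nf; linarith [h2]
    exact mul_right_cancel₀ (ne_of_gt hy) h2'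
  -- key: c^3 > s*(1+c), so x*c^4 > x*s*c*(1+c) = 1, hence x^2*c^4 > x, contradiction
  have key : s * (1 + c) < c ^ 3 := by nlinarith [pyth, hs, hc, sq_nonneg (s - 1), sq_nonneg (c - s)]
  have hcx : 0 < x * c := mul_pos hx (by linarith)
  have step : x * c * (s * (1 + c)) < x * c * c ^ 3 := by
    exact mul_lt_mul_of_pos_left key hcx
  nlinarith [mul_pos (mul_pos hs hs) (mul_pos hy hy), step, hx2, mul_pos hx hx, mul_pos (mul_pos hy hy) (mul_pos hs (mul_pos hs (show (0:ℝ) < c by linarith)))]
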